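/- For integers k ≥ 1 let ξ_k = k^{−1/2}, let θ_k ∈ (0,π) be defined by cos θ_k = (cos(ξ_k − ξ_{k+1}) + 1)/2, fix a ∈ (−π/2, π/2], let t_k(a) = 1/cos(a − Σ_{i=k}^∞ θ_i) and p_k = (t_k(a) cos ξ_k, t_k(a) sin ξ_k, t_k(a)), defined for all k ≥ k₀(a) where a − Σ_{i=k}^∞ θ_i ∈ (−π/2, π/2). Let v_k = (p_{k+1} − p_k)/‖p_{k+1} − p_k‖. Then for every k > k₀(a): ⟨v_k, p_k/‖p_k‖⟩ = ⟨v_{k−1}, p_k/‖p_k‖⟩ = sin(a − Σ_{i=k}^∞ θ_i); that is, the lines l_{k−1} (through p_{k−1}, p_k) and l_k (through p_k, p_{k+1}) form the same angle with the vector p_k. -/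

import Mathlib

open Real Filter
open scoped RealInnerProductSpace

noncomputable section

lemma theta_summable (ξ θ : ℕ → ℝ)
    (hξ : ∀ k : ℕ, ξ k = (k : ℝ) ^ (-(1 : ℝ) / 2))
    (hθmem : ∀ k : ℕ, 1 ≤ k → θ k ∈ Set.Ioo 0 π)
    (hθ : ∀ k : ℕ, 1 ≤ k → Real.cos (θ k) = (Real.cos (ξ k - ξ (k + 1)) + 1) / 2)
    (m : ℕ) : Summable (fun i : ℕ => θ (m + i)) := by
  have hδ : ∀ k : ℕ, 1 ≤ k → 0 ≤ ξ k - ξ (k + 1) := by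
    intro k hk
    have h1 : (0:ℝ) < (k:ℝ) := by exact_mod_cast hk
    have := Real.rpow_le_rpow_of_nonpos h1 (by exact_mod_cast Nat.le_succ k : (k:ℝ) ≤ (k+1:ℕ)) (by norm_num : (-(1:ℝ)/2) ≤ 0)
    rw [hξ k, hξ (k+1)]; push_cast at this ⊢; linarith
  have hbound : ∀ k : ℕ, 1 ≤ k → θ k ≤ π * (ξ k - ξ (k + 1)) := by
    intro k hk
    set δ := ξ k - ξ (k+1) with hδdef
    have hδ0 := hδ k hk
    have h1 : 1 - Real.cos δ ≤ δ ^ 2 / 2 := by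
      have := Real.one_sub_sq_div_two_le_cos (x := δ); linarith
    have hθk := hθmem k hk
    have h2 : Real.cos (θ k) ≤ 1 - 2 / π ^ 2 * (θ k) ^ 2 := by
      apply Real.cos_le_one_sub_mul_cos_sq
      rw [abs_of_pos hθk.1]; exact hθk.2.le
    have h3 : Real.cos (θ k) = (Real.cos δ + 1) / 2 := hθ k hk
    have hπ := Real.pi_pos
    -- 2/π² θ² ≤ 1 - cos θ = (1-cos δ)/2 ≤ δ²/4
    have h4 : 2 / π ^ 2 * (θ k) ^ 2 ≤ δ ^ 2 / 4 := by
      rw [h3] at h2; linarith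
    have h5 : 2 * θ k ^ 2 * 4 ≤ δ ^ 2 * π ^ 2 := by
      rw [div_mul_eq_mul_div, div_le_div_iff₀ (by positivity) (by norm_num : (0:ℝ) < 4)] at h4
      linarith
    by_contra hcon
    push_neg at hcon
    have hπδ : 0 ≤ π * δ := mul_nonneg hπ.le hδ0
    have h6 : (π * δ) * (π * δ) < θ k * θ k := mul_lt_mul'' hcon hcon hπδ hπδ
    have h7 : δ ^ 2 * π ^ 2 < θ k ^ 2 := by ring_nf at h6 ⊢; linarith
    nlinarith [sq_nonneg (θ k)]
  have hS : Summable (fun n : ℕ => θ (n + 1)) := by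
    apply summable_of_sum_range_le (c := π * ξ 1)
    · intro n; exact (hθmem (n+1) (Nat.le_add_left 1 n)).1.le
    · intro n
      calc ∑ i ∈ Finset.range n, θ (i + 1)
          ≤ ∑ i ∈ Finset.range n, π * (ξ (i+1) - ξ (i + 2)) := by
            apply Finset.sum_le_sum; intro i _
            exact hbound (i+1) (Nat.le_add_left 1 i)
        _ = π * (ξ 1 - ξ (n+1)) := by
            rw [← Finset.mul_sum]
            congr 1
            have : ∀ i : ℕ, ξ (i+1) - ξ (i+2) = (fun j => ξ (j+1)) i - (fun j => ξ (j+1)) (i+1) := by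
              intro i; simp
            simp_rw [this]
            rw [Finset.sum_range_sub' (fun j => ξ (j+1))]
        _ ≤ π * ξ 1 := by
            have : 0 ≤ ξ (n+1) := by
              rw [hξ]; positivity
            nlinarith [Real.pi_pos]
  have hSθ : Summable θ := (summable_nat_add_iff 1).mp hS
  have := (summable_nat_add_iff m).mpr hSθ
  simpa [add_comm] using this


lemma eq_of_sq_eq {x y : ℝ} (hx : 0 ≤ x) (hy : 0 ≤ y) (h : x ^ 2 = y ^ 2) : x = y := by
  rw [← Real.sqrt_sq hx, h, Real.sqrt_sq hy]

/-- For `k > k₀(a)`, the segments `l_{k-1}` and `l_k` of the constructed polygonal line form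
the same angle with the vector `p_k`; both inner products with the unit vector `p_k/‖p_k‖`
equal `sin(a − ∑_{i=k}^∞ θ_i)`. -/
theorem stmt_10 (ξ θ : ℕ → ℝ)
    (hξ : ∀ k : ℕ, ξ k = (k : ℝ) ^ (-(1 : ℝ) / 2))
    (hθmem : ∀ k : ℕ, 1 ≤ k → θ k ∈ Set.Ioo 0 π)
    (hθ : ∀ k : ℕ, 1 ≤ k → Real.cos (θ k) = (Real.cos (ξ k - ξ (k + 1)) + 1) / 2)
    (a : ℝ) (ha : a ∈ Set.Ioc (-(π / 2)) (π / 2))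
    (k₀ : ℕ) (hk₀ : 1 ≤ k₀)
    (hk₀a : ∀ k : ℕ, k₀ ≤ k → (a - ∑' i : ℕ, θ (k + i)) ∈ Set.Ioo (-(π / 2)) (π / 2))
    (t : ℕ → ℝ) (ht : ∀ k : ℕ, t k = 1 / Real.cos (a - ∑' i : ℕ, θ (k + i)))
    (p : ℕ → EuclideanSpace ℝ (Fin 3))
    (hp : ∀ k : ℕ, p k 0 = t k * Real.cos (ξ k) ∧ p k 1 = t k * Real.sin (ξ k) ∧
      p k 2 = t k)
    (v : ℕ → EuclideanSpace ℝ (Fin 3))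
    (hv : ∀ k : ℕ, v k = ‖p (k + 1) - p k‖⁻¹ • (p (k + 1) - p k))
    (k : ℕ) (hk : k₀ < k) :
    ⟪v k, ‖p k‖⁻¹ • p k⟫ = Real.sin (a - ∑' i : ℕ, θ (k + i)) ∧
      ⟪v (k - 1), ‖p k‖⁻¹ • p k⟫ = Real.sin (a - ∑' i : ℕ, θ (k + i)) := by
  set S : ℕ → ℝ := fun m => ∑' i : ℕ, θ (m + i) with hSdef
  have hsum : ∀ m : ℕ, Summable (fun i : ℕ => θ (m + i)) :=
    theta_summable ξ θ hξ hθmem hθ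
  have hrec : ∀ m : ℕ, S m = θ m + S (m + 1) := by
    intro m
    have h := Summable.tsum_eq_zero_add (hsum m)
    have he : (∑' b : ℕ, θ (m + (b + 1))) = ∑' b : ℕ, θ (m + 1 + b) :=
      tsum_congr fun b => by rw [show m + (b + 1) = m + 1 + b by omega]
    rw [he] at h
    simpa using h
  have hcos : ∀ m : ℕ, k₀ ≤ m → 0 < Real.cos (a - S m) := fun m hm =>
    Real.cos_pos_of_mem_Ioo (hk₀a m hm)
  have hip : ∀ i j : ℕ, ⟪p i, p j⟫ = t i * t j * (Real.cos (ξ i - ξ j) + 1) := by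
    intro i j
    obtain ⟨hi0, hi1, hi2⟩ := hp i
    obtain ⟨hj0, hj1, hj2⟩ := hp j
    simp only [PiLp.inner_apply, RCLike.inner_apply, conj_trivial, Fin.sum_univ_three]
    rw [hi0, hi1, hi2, hj0, hj1, hj2, Real.cos_sub]
    ring
  have main : ∀ m : ℕ, k₀ ≤ m →
      ⟪v m, ‖p m‖⁻¹ • p m⟫ = Real.sin (a - S m) ∧
      ⟪v m, ‖p (m + 1)‖⁻¹ • p (m + 1)⟫ = Real.sin (a - S (m + 1)) := by
    intro m hm
    have hm1 : 1 ≤ m := le_trans hk₀ hm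
    set A := a - S m with hA
    set B := a - S (m + 1) with hB
    have hAB : B = A + θ m := by rw [hA, hB, hrec m]; ring
    have hcA : 0 < Real.cos A := hcos m hm
    have hcB : 0 < Real.cos B := hcos (m + 1) (le_trans hm (Nat.le_succ m))
    have htA : t m = 1 / Real.cos A := ht m
    have htB : t (m + 1) = 1 / Real.cos B := ht (m + 1)
    have htApos : 0 < t m := by rw [htA]; positivity
    have htBpos : 0 < t (m + 1) := by rw [htB]; positivity
    have hsθ : 0 < Real.sin (θ m) :=
      Real.sin_pos_of_pos_of_lt_pi (hθmem m hm1).1 (hθmem m hm1).2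
    have h1 := Real.sin_sq_add_cos_sq A
    have h2 := Real.sin_sq_add_cos_sq (θ m)
    -- basic inner products
    have ipAA : ⟪p m, p m⟫ = 2 * t m ^ 2 := by rw [hip m m, sub_self, Real.cos_zero]; ring
    have ipBB : ⟪p (m + 1), p (m + 1)⟫ = 2 * t (m + 1) ^ 2 := by
      rw [hip, sub_self, Real.cos_zero]; ring
    have ipBA : ⟪p (m + 1), p m⟫ = 2 * t (m + 1) * t m * Real.cos (θ m) := by
      rw [hip]
      rw [show ξ (m + 1) - ξ m = -(ξ m - ξ (m + 1)) by ring, Real.cos_neg, hθ m hm1]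
      ring
    have ipAB : ⟪p m, p (m + 1)⟫ = 2 * t (m + 1) * t m * Real.cos (θ m) := by
      rw [real_inner_comm]; exact ipBA
    -- trig identities
    have key1 : Real.cos (θ m) * Real.cos A - Real.cos B = Real.sin A * Real.sin (θ m) := by
      rw [hAB, Real.cos_add]; ring
    have key2 : Real.cos A - Real.cos (θ m) * Real.cos B = Real.sin B * Real.sin (θ m) := by
      rw [hAB, Real.cos_add, Real.sin_add]
      linear_combination (-(Real.cos A)) * h2
    have trig2 : Real.cos A ^ 2 + Real.cos B ^ 2
        - 2 * Real.cos A * Real.cos B * Real.cos (θ m) = Real.sin (θ m) ^ 2 := by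
      rw [hAB, Real.cos_add]
      linear_combination (-(Real.cos A ^ 2)) * h2 + Real.sin (θ m) ^ 2 * h1
    -- norms
    set q : ℝ := Real.sin (θ m) / (Real.cos A * Real.cos B) with hq
    have hqpos : 0 < q := by rw [hq]; positivity
    have hnA : ‖p m‖ = Real.sqrt 2 * t m := by
      refine eq_of_sq_eq (norm_nonneg _) (mul_nonneg (Real.sqrt_nonneg 2) htApos.le) ?_
      rw [← real_inner_self_eq_norm_sq, ipAA, mul_pow, Real.sq_sqrt (by norm_num : (0:ℝ) ≤ 2)]
    have hnB : ‖p (m + 1)‖ = Real.sqrt 2 * t (m + 1) := by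
      refine eq_of_sq_eq (norm_nonneg _) (mul_nonneg (Real.sqrt_nonneg 2) htBpos.le) ?_
      rw [← real_inner_self_eq_norm_sq, ipBB, mul_pow, Real.sq_sqrt (by norm_num : (0:ℝ) ≤ 2)]
    have ipdd : ⟪p (m + 1) - p m, p (m + 1) - p m⟫
        = 2 * (t (m + 1) ^ 2 + t m ^ 2 - 2 * t (m + 1) * t m * Real.cos (θ m)) := by
      rw [inner_sub_left, inner_sub_right, inner_sub_right, ipAA, ipBB, ipAB, ipBA]; ring
    have keynorm : t (m + 1) ^ 2 + t m ^ 2 - 2 * t (m + 1) * t m * Real.cos (θ m)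
        = q ^ 2 := by
      rw [hq, htA, htB]
      field_simp
      linear_combination trig2
    have hnd : ‖p (m + 1) - p m‖ = Real.sqrt 2 * q := by
      refine eq_of_sq_eq (norm_nonneg _) (mul_nonneg (Real.sqrt_nonneg 2) hqpos.le) ?_
      rw [← real_inner_self_eq_norm_sq, ipdd, keynorm, mul_pow,
        Real.sq_sqrt (by norm_num : (0:ℝ) ≤ 2)]
    -- inner products of the difference with p m and p (m+1)
    have e1 : t (m + 1) * Real.cos (θ m) - t m = Real.sin A * q := by
      rw [htA, htB, hq]
      field_simp
      linear_combination key1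
    have e2 : t (m + 1) - t m * Real.cos (θ m) = Real.sin B * q := by
      rw [htA, htB, hq]
      field_simp
      linear_combination key2
    have hinA : ⟪p (m + 1) - p m, p m⟫ = 2 * t m * (Real.sin A * q) := by
      rw [inner_sub_left, ipBA, ipAA]
      linear_combination (2 * t m) * e1
    have hinB : ⟪p (m + 1) - p m, p (m + 1)⟫ = 2 * t (m + 1) * (Real.sin B * q) := by
      rw [inner_sub_left, ipBB, ipAB]
      linear_combination (2 * t (m + 1)) * e2
    have hs2 : Real.sqrt 2 * Real.sqrt 2 = 2 := Real.mul_self_sqrt (by norm_num)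
    have hs2pos : (0:ℝ) < Real.sqrt 2 := by positivity
    constructor
    · rw [hv m, real_inner_smul_left, real_inner_smul_right, hinA, hnd, hnA, hA]
      field_simp
      linear_combination (-Real.sin (a - S m)) * hs2
    · rw [hv m, real_inner_smul_left, real_inner_smul_right, hinB, hnd, hnB, hB]
      field_simp
      linear_combination (-Real.sin (a - S (m + 1))) * hs2
  refine ⟨(main k hk.le).1, ?_⟩
  have h2 := (main (k - 1) (by omega)).2
  rwa [show k - 1 + 1 = k by omega] at h2
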